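/- Let C be an irreducible N×N tropical (min-plus) matrix over 𝕋 = ℚ ∪ {+∞} with at least one finite entry. Then the tropical eigenvalue of C equals the minimum over all directed cycles γ in the adjacency digraph of C of (weight of γ)/(length of γ), and this eigenvalue is unique. -/

import Mathlib

/-- Irreducibility of a tropical (min-plus) matrix: the adjacency digraph, which has
an arc `j → i` whenever `C i j ≠ ⊤`, is strongly connected. -/
def TropIrreducible {N : ℕ} (C : Matrix (Fin N) (Fin N) (WithTop ℚ)) : Prop :=
  ∀ i j : Fin N, Relation.ReflTransGen (fun a b => C b a ≠ ⊤) i j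

/-- `Λ` is a tropical eigenvalue of `C`: there is a vector `V`, not identically `+∞`,
with `min_j (C_{ij} + V_j) = Λ + V_i` for all `i`. -/
def IsTropEigenvalue {N : ℕ} (C : Matrix (Fin (N + 1)) (Fin (N + 1)) (WithTop ℚ))
    (Λ : WithTop ℚ) : Prop :=
  ∃ V : Fin (N + 1) → WithTop ℚ, V ≠ (fun _ => ⊤) ∧
    ∀ i, Finset.univ.inf' Finset.univ_nonempty (fun j => C i j + V j) = Λ + V i

/-- The set of cycle means of the adjacency digraph of `C`: rationals `q` such that some
directed closed path `γ` of length `k > 0` (all of whose arcs are finite) has total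
weight `∑_{m<k} C_{γ(m+1), γ(m)} = k·q`. -/
def CycleMeans {N : ℕ} (C : Matrix (Fin (N + 1)) (Fin (N + 1)) (WithTop ℚ)) : Set ℚ :=
  {q | ∃ (k : ℕ) (γ : ℕ → Fin (N + 1)), 0 < k ∧ γ k = γ 0 ∧
    (∑ m ∈ Finset.range k, C (γ (m + 1)) (γ m)) = (((k : ℚ) * q : ℚ) : WithTop ℚ)}

private lemma trop_telescope (k : ℕ) (f : ℕ → ℚ) (hf : f k = f 0) :
    ∑ m ∈ Finset.range k, f (m + 1) = ∑ m ∈ Finset.range k, f m := by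
  have h1 := Finset.sum_range_succ' f k
  have h2 := Finset.sum_range_succ f k
  rw [hf] at h2
  rw [h2] at h1
  linarith

private lemma trop_aux (N : ℕ) (C : Matrix (Fin (N + 1)) (Fin (N + 1)) (WithTop ℚ))
    (hfin : ∃ i j, C i j ≠ ⊤) (hirr : TropIrreducible C)
    (Λ : WithTop ℚ) (hΛ : IsTropEigenvalue C Λ) :
    ∃ q : ℚ, Λ = (q : WithTop ℚ) ∧ IsLeast (CycleMeans C) q := by
  obtain ⟨V, hVne, hV⟩ := hΛ
  obtain ⟨j0, hj0⟩ : ∃ j, V j ≠ ⊤ := by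
    by_contra h; push_neg at h; exact hVne (funext h)
  have key : ∀ i j, C i j ≠ ⊤ → V j ≠ ⊤ → Λ + V i ≠ ⊤ := by
    intro i j hC hVj
    have h1 : Λ + V i ≤ C i j + V j := by
      rw [← hV i]; exact Finset.inf'_le _ (Finset.mem_univ j)
    have h2 : C i j + V j ≠ ⊤ := by
      simp [WithTop.add_eq_top, hC, hVj]
    exact ne_top_of_le_ne_top h2 h1
  have hVfin : ∀ i, V i ≠ ⊤ := by
    intro i
    induction hirr j0 i with
    | refl => exact hj0
    | tail _ hstep ih =>
      have := key _ _ hstep ih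
      intro hc
      rw [hc, add_top] at this
      exact this rfl
  have hΛfin : Λ ≠ ⊤ := by
    obtain ⟨i, j, hij⟩ := hfin
    have := key i j hij (hVfin j)
    intro hc; rw [hc, top_add] at this; exact this rfl
  obtain ⟨lam, hlam⟩ := WithTop.ne_top_iff_exists.mp hΛfin
  set v : Fin (N + 1) → ℚ := fun i => (V i).untop (hVfin i) with hv
  have hvV : ∀ i, (v i : WithTop ℚ) = V i := fun i => WithTop.coe_untop _ _
  -- lower bound
  have hlb : ∀ q ∈ CycleMeans C, lam ≤ q := by
    rintro q ⟨k, γ, hk, hγ, hsum⟩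
    have harcs : ∀ m ∈ Finset.range k, C (γ (m + 1)) (γ m) ≠ ⊤ := by
      intro m hm hc
      have : (∑ m ∈ Finset.range k, C (γ (m + 1)) (γ m)) = ⊤ :=
        WithTop.sum_eq_top.mpr ⟨m, hm, hc⟩
      rw [hsum] at this
      exact WithTop.coe_ne_top this
    set w : ℕ → ℚ := fun m => (C (γ (m + 1)) (γ m)).untopD 0 with hw
    have hwC : ∀ m ∈ Finset.range k, (w m : WithTop ℚ) = C (γ (m + 1)) (γ m) := by
      intro m hm
      obtain ⟨c, hc⟩ := WithTop.ne_top_iff_exists.mp (harcs m hm)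
      simp only [hw, ← hc, WithTop.untopD_coe]
    have harc : ∀ m ∈ Finset.range k, lam + v (γ (m + 1)) ≤ w m + v (γ m) := by
      intro m hm
      have h1 : Λ + V (γ (m + 1)) ≤ C (γ (m + 1)) (γ m) + V (γ m) := by
        rw [← hV (γ (m + 1))]; exact Finset.inf'_le _ (Finset.mem_univ (γ m))
      rw [← hlam, ← hvV (γ (m + 1)), ← hvV (γ m), ← hwC m hm, ← WithTop.coe_add,
        ← WithTop.coe_add] at h1
      exact_mod_cast h1
    have hsumq : ∑ m ∈ Finset.range k, w m = (k : ℚ) * q := by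
      have : ((∑ m ∈ Finset.range k, w m : ℚ) : WithTop ℚ) = (((k : ℚ) * q : ℚ) : WithTop ℚ) := by
        rw [WithTop.coe_sum, Finset.sum_congr rfl hwC, hsum]
      exact_mod_cast this
    have hS := Finset.sum_le_sum harc
    rw [Finset.sum_add_distrib, Finset.sum_add_distrib, Finset.sum_const, Finset.card_range,
      nsmul_eq_mul, hsumq, trop_telescope k (fun m => v (γ m)) (congrArg v hγ)] at hS
    have hkpos : (0 : ℚ) < k := by exact_mod_cast hk
    nlinarith [hS]
  -- membership
  have hsig : ∀ i, ∃ j, C i j + V j = Λ + V i := by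
    intro i
    obtain ⟨j, _, hj⟩ := Finset.exists_mem_eq_inf' (Finset.univ_nonempty)
      (fun j => C i j + V j)
    exact ⟨j, by rw [← hj, hV i]⟩
  choose σ hσ using hsig
  obtain ⟨a, ha, b, hb, hab, heq⟩ := Finset.exists_ne_map_eq_of_card_lt_of_maps_to
    (s := Finset.range (N + 2)) (t := (Finset.univ : Finset (Fin (N + 1))))
    (by simp) (f := fun m => σ^[m] j0) (fun a _ => Finset.mem_univ _)
  wlog hlt : a < b generalizing a b
  · exact this b hb a ha (Ne.symm hab) heq.symm (by omega)
  set k := b - a with hkdef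
  have hk : 0 < k := by omega
  set y := σ^[a] j0 with hy
  have hper : σ^[k] y = y := by
    rw [hy, ← Function.iterate_add_apply]
    have : k + a = b := by omega
    rw [this, ← heq]
  set γ : ℕ → Fin (N + 1) := fun m => σ^[k - m] y with hγdef
  have hγ0 : γ 0 = y := by simp [hγdef, hper]
  have hγk : γ k = γ 0 := by simp [hγdef, hper]
  have hstep : ∀ m, m < k → γ m = σ (γ (m + 1)) := by
    intro m hm
    have : k - m = (k - (m + 1)) + 1 := by omega
    rw [hγdef]
    simp only [this, Function.iterate_succ_apply']
  have harcfin : ∀ m, m < k → C (γ (m + 1)) (γ m) ≠ ⊤ := by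
    intro m hm hc
    have h1 := hσ (γ (m + 1))
    rw [← hstep m hm] at h1
    rw [hc, top_add] at h1
    have h2 : Λ + V (γ (m + 1)) ≠ ⊤ := by
      simp [WithTop.add_eq_top, hΛfin, hVfin]
    exact h2 h1.symm
  have harc : ∀ m ∈ Finset.range k,
      C (γ (m + 1)) (γ m) = ((lam + v (γ (m + 1)) - v (γ m) : ℚ) : WithTop ℚ) := by
    intro m hm
    rw [Finset.mem_range] at hm
    obtain ⟨c, hc⟩ := WithTop.ne_top_iff_exists.mp (harcfin m hm)
    have h1 := hσ (γ (m + 1))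
    rw [← hstep m hm, ← hc, ← hlam, ← hvV (γ (m + 1)), ← hvV (γ m), ← WithTop.coe_add,
      ← WithTop.coe_add] at h1
    have h2 : c + v (γ m) = lam + v (γ (m + 1)) := by exact_mod_cast h1
    rw [← hc]
    congr 1
    linarith
  have hmem : lam ∈ CycleMeans C := by
    refine ⟨k, γ, hk, hγk, ?_⟩
    rw [Finset.sum_congr rfl harc, ← WithTop.coe_sum]
    congr 1
    have : ∑ m ∈ Finset.range k, (lam + v (γ (m + 1)) - v (γ m)) =
        (k : ℚ) * lam + (∑ m ∈ Finset.range k, v (γ (m + 1)))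
          - ∑ m ∈ Finset.range k, v (γ m) := by
      rw [Finset.sum_sub_distrib, Finset.sum_add_distrib, Finset.sum_const, Finset.card_range,
        nsmul_eq_mul]
    rw [this, trop_telescope k (fun m => v (γ m)) (congrArg v hγk)]
    ring
  exact ⟨lam, hlam.symm, hmem, hlb⟩

/-- tropical eigenvalue = minimal cycle mean, and uniqueness.
For an irreducible tropical matrix with a finite entry, any tropical eigenvalue `Λ`
is the minimum of the cycle means, and the tropical eigenvalue is unique. -/
theorem tropical_eigenvalue_eq_min_cycle_mean (N : ℕ)
    (C : Matrix (Fin (N + 1)) (Fin (N + 1)) (WithTop ℚ))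
    (hfin : ∃ i j, C i j ≠ ⊤) (hirr : TropIrreducible C)
    (Λ : WithTop ℚ) (hΛ : IsTropEigenvalue C Λ) :
    (∃ q : ℚ, Λ = (q : WithTop ℚ) ∧ IsLeast (CycleMeans C) q) ∧
    (∀ Λ' : WithTop ℚ, IsTropEigenvalue C Λ' → Λ' = Λ) := by
  obtain ⟨q, hq, hql⟩ := trop_aux N C hfin hirr Λ hΛ
  refine ⟨⟨q, hq, hql⟩, fun Λ' hΛ' => ?_⟩
  obtain ⟨q', hq', hql'⟩ := trop_aux N C hfin hirr Λ' hΛ'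
  rw [hq, hq', hql'.unique hql]
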